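/- The 1D pressureless scheme conserves total mass: if ρᵢⁿ⁺¹ = ρᵢ₋₁ⁿ L(-1+ruᵢ₋₁ⁿ, ruᵢ₋₁ⁿ) + ρᵢⁿ L(ruᵢⁿ, 1+ruᵢⁿ) + ρᵢ₊₁ⁿ L(1+ruᵢ₊₁ⁿ, 2+ruᵢ₊₁ⁿ), where L(a,b) is the length of [0,1]∩[a,b], the states have finite support, all ρᵢⁿ ≥ 0, and the CFL condition r·|uᵢⁿ| ≤ 1 holds for all i, then ∑ᵢ ρᵢⁿ⁺¹ = ∑ᵢ ρᵢⁿ. -/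
import Mathlib


/-- Truncated length of `[0,1] ∩ [a,b]`. -/
noncomputable def Ltrunc (a b : ℝ) : ℝ := max 0 (min 1 b - max 0 a)

lemma Lsum {a : ℝ} (h : |a| ≤ 1) :
    Ltrunc (-1 + a) a + Ltrunc a (1 + a) + Ltrunc (1 + a) (2 + a) = 1 := by
  obtain ⟨h1, h2⟩ := abs_le.mp h
  unfold Ltrunc
  rcases le_total a 0 with ha | ha
  · rw [max_eq_left (by linarith : -1 + a ≤ 0), min_eq_right (by linarith : a ≤ 1),
      min_eq_right (by linarith : 1 + a ≤ 1), max_eq_left ha,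
      min_eq_left (by linarith : (1:ℝ) ≤ 2 + a),
      max_eq_right (by linarith : (0:ℝ) ≤ 1 + a),
      max_eq_left (by linarith : a - 0 ≤ 0),
      max_eq_right (by linarith : (0:ℝ) ≤ 1 + a - 0),
      max_eq_right (by linarith : (0:ℝ) ≤ 1 - (1 + a))]
    ring
  · rw [max_eq_left (by linarith : -1 + a ≤ 0), min_eq_right h2,
      min_eq_left (by linarith : (1:ℝ) ≤ 1 + a), max_eq_right ha,
      min_eq_left (by linarith : (1:ℝ) ≤ 2 + a),
      max_eq_right (by linarith : (0:ℝ) ≤ 1 + a),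
      max_eq_right (by linarith : (0:ℝ) ≤ a - 0),
      max_eq_right (by linarith : (0:ℝ) ≤ 1 - a),
      max_eq_left (by linarith : 1 - (1 + a) ≤ 0)]
    ring

theorem stmt_12 (ρn : ℤ → ℝ) (un : ℤ → ℝ) (r : ℝ) (hr : 0 < r)
    (hρ : ∀ i, 0 ≤ ρn i) (hfin : (Function.support ρn).Finite)
    (hCFL : ∀ i, r * |un i| ≤ 1)
    (ρn' : ℤ → ℝ)
    (hsch : ∀ i, ρn' i =
      ρn (i - 1) * Ltrunc (-1 + r * un (i - 1)) (r * un (i - 1)) +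
      ρn i * Ltrunc (r * un i) (1 + r * un i) +
      ρn (i + 1) * Ltrunc (1 + r * un (i + 1)) (2 + r * un (i + 1))) :
    ∑ᶠ i, ρn' i = ∑ᶠ i, ρn i := by
  set f1 : ℤ → ℝ := fun i => ρn i * Ltrunc (-1 + r * un i) (r * un i) with hf1def
  set f2 : ℤ → ℝ := fun i => ρn i * Ltrunc (r * un i) (1 + r * un i) with hf2def
  set f3 : ℤ → ℝ := fun i => ρn i * Ltrunc (1 + r * un i) (2 + r * un i) with hf3def
  have hsub : ∀ g : ℤ → ℝ, (Function.support (fun i => ρn i * g i)).Finite :=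
    fun g => hfin.subset (fun x hx => by
      simp only [Function.mem_support] at hx ⊢
      exact fun h => hx (by simp [h]))
  have h1 : (Function.support f1).Finite := hsub _
  have h2 : (Function.support f2).Finite := hsub _
  have h3 : (Function.support f3).Finite := hsub _
  have h1' : (Function.support (fun i => f1 (i - 1))).Finite := by
    have := h1.preimage (f := fun i : ℤ => i - 1) (Function.Injective.injOn (fun a b => by omega))
    exact this
  have h3' : (Function.support (fun i => f3 (i + 1))).Finite := by
    have := h3.preimage (f := fun i : ℤ => i + 1) (Function.Injective.injOn (fun a b => by omega))
    exact this
  calc ∑ᶠ i, ρn' i = ∑ᶠ i, (f1 (i - 1) + f2 i + f3 (i + 1)) := finsum_congr hsch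
    _ = (∑ᶠ i, f1 (i - 1)) + (∑ᶠ i, f2 i) + ∑ᶠ i, f3 (i + 1) := by
        have h12 : (Function.support (fun i => f1 (i - 1) + f2 i)).Finite :=
          (h1'.union h2).subset (Function.support_add _ _)
        rw [finsum_add_distrib h12 h3', finsum_add_distrib h1' h2]
    _ = (∑ᶠ i, f1 i) + (∑ᶠ i, f2 i) + ∑ᶠ i, f3 i := by
        have e1 : ∑ᶠ i, f1 (i - 1) = ∑ᶠ i, f1 i := finsum_comp_equiv (Equiv.subRight (1:ℤ))
        have e3 : ∑ᶠ i, f3 (i + 1) = ∑ᶠ i, f3 i := finsum_comp_equiv (Equiv.addRight (1:ℤ))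
        rw [e1, e3]
    _ = ∑ᶠ i, (f1 i + f2 i + f3 i) := by
        have h12 : (Function.support (fun i => f1 i + f2 i)).Finite :=
          (h1.union h2).subset (Function.support_add _ _)
        rw [finsum_add_distrib h12 h3, finsum_add_distrib h1 h2]
    _ = ∑ᶠ i, ρn i := by
        apply finsum_congr
        intro i
        have ha : |r * un i| ≤ 1 := by
          rw [abs_mul, abs_of_pos hr]; exact hCFL i
        simp only [hf1def, hf2def, hf3def]
        rw [← mul_add, ← mul_add, Lsum ha, mul_one]
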